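/- Let N ≥ 1, let Ω ⊆ ℝ^N be a nonempty open set, let n ≥ 1 be an integer, and let f : Ω → ℂ be measurable. Then ∫_Ω |f(x)| dx ≤ ‖f‖_{Y_n}, i.e. ∫_Ω |f(x)| dx ≤ (2 κ_N n^N)^{1/(n+1)} · ( ∫_{Ω_n} |f(x)|^{1+ε_n} dx + ∫_{Ω∖Ω_n} |f(x)|^{1+ε_n} |x|^{ε_n(N+ε_n)} dx )^{1/(1+ε_n)}. -/

import Mathlib

open MeasureTheory
open scoped ENNReal

section Helpers
open Set Metric

lemma lintegral_polar {E : Type*} [NormedAddCommGroup E] [NormedSpace ℝ E]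
    [MeasurableSpace E] [BorelSpace E] [FiniteDimensional ℝ E] [Nontrivial E]
    (μ : Measure E) [μ.IsAddHaarMeasure] {g : ℝ → ℝ≥0∞} (hg : Measurable g) :
    ∫⁻ x, g ‖x‖ ∂μ = (Module.finrank ℝ E) * μ (ball 0 1) *
      ∫⁻ y in Ioi (0:ℝ), ENNReal.ofReal (y ^ (Module.finrank ℝ E - 1)) * g y := by
  have h0 : (univ : Set E) =ᵐ[μ] ({0}ᶜ : Set E) :=
    (ae_eq_univ.2 (by simp [measure_singleton])).symm
  calc ∫⁻ x, g ‖x‖ ∂μ = ∫⁻ x in ({0}ᶜ : Set E), g ‖x‖ ∂μ := by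
        rw [← setLIntegral_univ, setLIntegral_congr h0]
    _ = ∫⁻ x : ({0}ᶜ : Set E), g ‖(x : E)‖ ∂(μ.comap (↑)) :=
        (lintegral_subtype_comap (measurableSet_singleton 0).compl _).symm
    _ = ∫⁻ p : sphere (0:E) 1 × Ioi (0:ℝ), g p.2
          ∂(μ.toSphere.prod (.volumeIoiPow (Module.finrank ℝ E - 1))) :=
        by have := μ.measurePreserving_homeomorphUnitSphereProd.lintegral_comp
             (hg.comp (measurable_subtype_coe.comp measurable_snd))
           simpa only [Function.comp_def, homeomorphUnitSphereProd_apply_snd_coe] using this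
    _ = μ.toSphere Set.univ * ∫⁻ y : Ioi (0:ℝ), g y ∂(.volumeIoiPow (Module.finrank ℝ E - 1)) := by
        rw [lintegral_prod]
        · simp [lintegral_const, mul_comm]
        · exact (hg.comp (measurable_subtype_coe.comp measurable_snd)).aemeasurable
    _ = _ := by
        rw [Measure.toSphere_apply_univ]
        congr 1
        have h2 : Measurable (fun y : Ioi (0:ℝ) => g ↑y) := hg.comp measurable_subtype_coe
        have hd : (Measure.volumeIoiPow (Module.finrank ℝ E - 1)) =
            (Measure.comap Subtype.val volume).withDensity
              (fun r : Ioi (0:ℝ) => ENNReal.ofReal (r.1 ^ (Module.finrank ℝ E - 1))) := rfl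
        rw [hd, lintegral_withDensity_eq_lintegral_mul _
            ((measurable_subtype_coe.pow_const _).ennreal_ofReal) h2]
        simp only [Pi.mul_apply, Function.comp_apply]
        exact lintegral_subtype_comap measurableSet_Ioi
          (fun y => ENNReal.ofReal (y ^ (Module.finrank ℝ E - 1)) * g y)

lemma one_dim (N n : ℕ) (hN : 1 ≤ N) (hn : 1 ≤ n) :
    ∫⁻ y in Ioi ((n:ℝ)), ENNReal.ofReal (y ^ (N - 1)) *
        ENNReal.ofReal y ^ (-((N:ℝ) + 1/(n:ℝ))) ∂volume ≤ (n : ℝ≥0∞) := by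
  have hn0 : (0:ℝ) < n := by exact_mod_cast hn.trans_lt' zero_lt_one
  have ha : -(1 + 1/(n:ℝ)) < -1 := by
    have : 0 < 1/(n:ℝ) := by positivity
    linarith
  calc ∫⁻ y in Ioi ((n:ℝ)), ENNReal.ofReal (y ^ (N - 1)) *
        ENNReal.ofReal y ^ (-((N:ℝ) + 1/(n:ℝ))) ∂volume
      = ∫⁻ y in Ioi ((n:ℝ)), ENNReal.ofReal (y ^ (-(1 + 1/(n:ℝ)))) ∂volume := by
        refine setLIntegral_congr_fun measurableSet_Ioi (fun y hy => ?_)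
        have hy0 : (0:ℝ) < y := hn0.trans hy
        rw [ENNReal.ofReal_rpow_of_pos hy0, ← ENNReal.ofReal_mul (by positivity),
          ← Real.rpow_natCast y (N - 1), ← Real.rpow_add hy0]
        congr 2
        have : ((N - 1 : ℕ) : ℝ) = (N : ℝ) - 1 := by
          push_cast [Nat.cast_sub hN]; ring
        rw [this]; ring
    _ = ENNReal.ofReal (∫ y in Ioi ((n:ℝ)), y ^ (-(1 + 1/(n:ℝ)))) := by
        rw [ofReal_integral_eq_lintegral_ofReal (integrableOn_Ioi_rpow_of_lt ha hn0)]
        filter_upwards [ae_restrict_mem measurableSet_Ioi] with y hy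
        exact Real.rpow_nonneg (hn0.trans hy).le _
    _ ≤ (n : ℝ≥0∞) := by
        rw [integral_Ioi_rpow_of_lt ha hn0, ← ENNReal.ofReal_natCast]
        apply ENNReal.ofReal_le_ofReal
        have e1 : -(n:ℝ) ^ (-(1 + 1/(n:ℝ)) + 1) / (-(1 + 1/(n:ℝ)) + 1)
            = (n:ℝ) ^ (-(1/(n:ℝ))) * n := by
          rw [show -(1 + 1/(n:ℝ)) + 1 = -(1/(n:ℝ)) by ring, div_neg, neg_div, neg_neg,
            div_div_eq_mul_div, div_one]
        rw [e1]
        have h1 : (n:ℝ) ^ (-(1/(n:ℝ))) ≤ 1 :=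
          Real.rpow_le_one_of_one_le_of_nonpos (by exact_mod_cast hn) (by simp [le_of_lt, hn0])
        nlinarith

lemma two_rpow_helper (a b : ℝ≥0∞) {p q : ℝ} (hpq : p.HolderConjugate q) :
    a ^ (1/p) + b ^ (1/p) ≤ 2 ^ (1/q) * (a + b) ^ (1/p) := by
  have hp0 : 0 < p := hpq.pos
  have hinv : 0 ≤ 1/p := by positivity
  have hrp : ∀ x : ℝ≥0∞, (x ^ (1/p)) ^ p = x := fun x => by
    rw [← ENNReal.rpow_mul, one_div_mul_cancel hp0.ne', ENNReal.rpow_one]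
  have h := ENNReal.rpow_arith_mean_le_arith_mean2_rpow (1/2) (1/2)
    (a ^ (1/p)) (b ^ (1/p)) (ENNReal.add_halves 1) hpq.lt.le
  rw [hrp, hrp] at h
  have hx : (1/2 : ℝ≥0∞) * (a ^ (1/p)) + 1/2 * (b ^ (1/p))
      = (a ^ (1/p) + b ^ (1/p)) / 2 := by
    simp [div_eq_mul_inv, one_div, add_mul, mul_comm]
  have hy : (1/2 : ℝ≥0∞) * a + 1/2 * b = (a + b) / 2 := by
    simp [div_eq_mul_inv, one_div, add_mul, mul_comm]
  rw [hx, hy] at h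
  have h2 : (a ^ (1/p) + b ^ (1/p)) / 2 ≤ ((a + b) / 2) ^ (1/p) := by
    have := ENNReal.rpow_le_rpow h hinv
    rwa [← ENNReal.rpow_mul, mul_one_div_cancel hp0.ne', ENNReal.rpow_one] at this
  have h2p0 : (2 : ℝ≥0∞) ^ (1/p) ≠ 0 := by
    simp [ENNReal.rpow_eq_zero_iff]
  have h2pt : (2 : ℝ≥0∞) ^ (1/p) ≠ ⊤ :=
    ENNReal.rpow_ne_top_of_nonneg hinv (by norm_num)
  have hsplit : (2 : ℝ≥0∞) ^ (1/p) * 2 ^ (1/q) = 2 := by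
    rw [← ENNReal.rpow_add _ _ two_ne_zero ENNReal.ofNat_ne_top, one_div, one_div,
      hpq.inv_add_inv_eq_one, ENNReal.rpow_one]
  calc a ^ (1/p) + b ^ (1/p) = 2 * ((a ^ (1/p) + b ^ (1/p)) / 2) :=
        (ENNReal.mul_div_cancel two_ne_zero ENNReal.ofNat_ne_top).symm
    _ ≤ 2 * ((a + b) / 2) ^ (1/p) := mul_le_mul_right h2 2
    _ = 2 * ((a + b) ^ (1/p) / 2 ^ (1/p)) := by
        rw [ENNReal.div_rpow_of_nonneg _ _ hinv]
    _ = 2 ^ (1/q) * (a + b) ^ (1/p) := by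
        have hdw : (2:ℝ≥0∞) ^ (1/q) = 2 / 2 ^ (1/p) := by
          rw [ENNReal.eq_div_iff h2p0 h2pt, hsplit]
        rw [hdw, ENNReal.div_eq_inv_mul, ENNReal.div_eq_inv_mul, ← mul_assoc,
          mul_comm 2 (((2:ℝ≥0∞) ^ (1/p))⁻¹)]

end Helpers

/-- The `Y_n`-norm of a measurable function `f : Ω → ℂ`, for `Ω ⊆ ℝ^N`:
`‖f‖_{Y_n} = (2 κ_N n^N)^{1/(n+1)} · ( ∫_{Ω_n} |f|^{1+εₙ} + ∫_{Ω∖Ω_n} |f|^{1+εₙ} |x|^{εₙ(N+εₙ)} )^{1/(1+εₙ)}`,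
where `εₙ = 1/n`, `Ω_n = {x ∈ Ω : |x| ≤ n}`, and `κ_N = N·vol(B(0,1))` is the surface
measure of the unit sphere of `ℝ^N`. The value `+∞` is allowed. -/
noncomputable def Ynorm (N : ℕ) (Ω : Set (EuclideanSpace ℝ (Fin N))) (n : ℕ)
    (f : EuclideanSpace ℝ (Fin N) → ℂ) : ℝ≥0∞ :=
  (2 * ((N : ℝ≥0∞) * volume (Metric.ball (0 : EuclideanSpace ℝ (Fin N)) 1)) * (n : ℝ≥0∞) ^ N)
      ^ ((1 : ℝ) / ((n : ℝ) + 1)) *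
    ((∫⁻ x in Ω ∩ {x | ‖x‖ ≤ (n : ℝ)}, (‖f x‖₊ : ℝ≥0∞) ^ (1 + 1 / (n : ℝ)) ∂volume)
        + ∫⁻ x in Ω \ {x | ‖x‖ ≤ (n : ℝ)},
            (‖f x‖₊ : ℝ≥0∞) ^ (1 + 1 / (n : ℝ))
              * (‖x‖₊ : ℝ≥0∞) ^ ((1 / (n : ℝ)) * ((N : ℝ) + 1 / (n : ℝ))) ∂volume)
      ^ ((1 : ℝ) / (1 + 1 / (n : ℝ)))

/-- `L¹`–`Y_n` estimate: `‖f‖_{L¹(Ω)} ≤ ‖f‖_{Y_n}` for every measurable `f : Ω → ℂ`. -/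
theorem lintegral_le_Ynorm
    (N : ℕ) (hN : 1 ≤ N)
    (Ω : Set (EuclideanSpace ℝ (Fin N))) (hΩ : IsOpen Ω) (hΩne : Ω.Nonempty)
    (n : ℕ) (hn : 1 ≤ n)
    (f : EuclideanSpace ℝ (Fin N) → ℂ) (hf : Measurable f) :
    (∫⁻ x in Ω, (‖f x‖₊ : ℝ≥0∞) ∂volume) ≤ Ynorm N Ω n f := by
  classical
  unfold Ynorm
  have hfin : Module.finrank ℝ (EuclideanSpace ℝ (Fin N)) = N := finrank_euclideanSpace_fin
  haveI : Nontrivial (EuclideanSpace ℝ (Fin N)) :=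
    Module.nontrivial_of_finrank_pos (R := ℝ) (by rw [hfin]; omega)
  have hn0R : (0:ℝ) < n := by exact_mod_cast hn.trans_lt' zero_lt_one
  have hp1 : (1:ℝ) < 1 + 1 / (n:ℝ) := by
    have : (0:ℝ) < 1 / n := by positivity
    linarith
  have hpq : (1 + 1 / (n:ℝ)).HolderConjugate ((n:ℝ) + 1) := by
    rw [Real.holderConjugate_iff]
    constructor
    · exact hp1
    · field_simp
  have hp0 : (0:ℝ) < 1 + 1 / (n:ℝ) := by linarith
  have hqinv : (0:ℝ) ≤ 1 / ((n:ℝ) + 1) := by positivity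
  have hpinv : (0:ℝ) ≤ 1 / (1 + 1 / (n:ℝ)) := by positivity
  set S : Set (EuclideanSpace ℝ (Fin N)) := {x | ‖x‖ ≤ (n:ℝ)} with hSdef
  have hS : MeasurableSet S := measurableSet_le measurable_norm measurable_const
  have hΩm : MeasurableSet Ω := hΩ.measurableSet
  set K : ℝ≥0∞ := (N : ℝ≥0∞) * volume (Metric.ball (0 : EuclideanSpace ℝ (Fin N)) 1)
      * (n : ℝ≥0∞) ^ N with hK
  set I1 : ℝ≥0∞ := ∫⁻ x in Ω ∩ S, (‖f x‖₊ : ℝ≥0∞) ^ (1 + 1 / (n : ℝ)) ∂volume with hI1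
  set I2 : ℝ≥0∞ := ∫⁻ x in Ω \ S,
      (‖f x‖₊ : ℝ≥0∞) ^ (1 + 1 / (n : ℝ))
        * (‖x‖₊ : ℝ≥0∞) ^ ((1 / (n : ℝ)) * ((N : ℝ) + 1 / (n : ℝ))) ∂volume with hI2
  -- splitting
  have hsplit : (∫⁻ x in Ω, (‖f x‖₊ : ℝ≥0∞) ∂volume)
      = (∫⁻ x in Ω ∩ S, (‖f x‖₊ : ℝ≥0∞) ∂volume)
        + ∫⁻ x in Ω \ S, (‖f x‖₊ : ℝ≥0∞) ∂volume := by
    rw [← lintegral_union (hΩm.diff hS)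
      (Set.disjoint_sdiff_right.mono_left Set.inter_subset_right),
      Set.inter_union_diff]
  -- volume bound for the inner part
  have hA : volume (Ω ∩ S) ≤ K := by
    calc volume (Ω ∩ S) ≤ volume (Metric.closedBall (0 : EuclideanSpace ℝ (Fin N)) n) :=
          measure_mono fun x hx => mem_closedBall_zero_iff.2 hx.2
      _ = ENNReal.ofReal ((n:ℝ) ^ Module.finrank ℝ (EuclideanSpace ℝ (Fin N)))
            * volume (Metric.ball (0 : EuclideanSpace ℝ (Fin N)) 1) :=
          Measure.addHaar_closedBall _ _ hn0R.le
      _ = (n : ℝ≥0∞) ^ N * volume (Metric.ball (0 : EuclideanSpace ℝ (Fin N)) 1) := by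
          rw [hfin, ENNReal.ofReal_pow hn0R.le, ENNReal.ofReal_natCast]
      _ = 1 * (volume (Metric.ball (0 : EuclideanSpace ℝ (Fin N)) 1) * (n : ℝ≥0∞) ^ N) := by
          ring
      _ ≤ (N:ℝ≥0∞) * (volume (Metric.ball (0 : EuclideanSpace ℝ (Fin N)) 1) * (n : ℝ≥0∞) ^ N) :=
          mul_le_mul_left (by exact_mod_cast hN) _
      _ = K := by rw [hK]; ring
  -- part 1 : Hölder on Ω ∩ S
  have bound1 : (∫⁻ x in Ω ∩ S, (‖f x‖₊ : ℝ≥0∞) ∂volume)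
      ≤ I1 ^ (1 / (1 + 1 / (n:ℝ))) * K ^ (1 / ((n:ℝ) + 1)) := by
    have h := ENNReal.lintegral_mul_le_Lp_mul_Lq (volume.restrict (Ω ∩ S)) hpq
      (f := fun x => (‖f x‖₊ : ℝ≥0∞)) (g := fun _ => 1)
      hf.nnnorm.coe_nnreal_ennreal.aemeasurable aemeasurable_const
    simp only [Pi.mul_apply, mul_one, ENNReal.one_rpow, lintegral_const, one_mul,
      Measure.restrict_apply MeasurableSet.univ, Set.univ_inter] at h
    refine h.trans ?_
    exact mul_le_mul_right (ENNReal.rpow_le_rpow hA hqinv) _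
  -- part 2 : weighted Hölder on Ω \ S
  set sp : ℝ := ((1 / (n:ℝ)) * ((N:ℝ) + 1 / (n:ℝ))) / (1 + 1 / (n:ℝ)) with hsp
  set u : EuclideanSpace ℝ (Fin N) → ℝ≥0∞ :=
    fun x => (‖f x‖₊ : ℝ≥0∞) * (‖x‖₊ : ℝ≥0∞) ^ sp with hu
  set v : EuclideanSpace ℝ (Fin N) → ℝ≥0∞ := fun x => (‖x‖₊ : ℝ≥0∞) ^ (-sp) with hv
  have hrpowm : ∀ c : ℝ, Measurable fun x : EuclideanSpace ℝ (Fin N) =>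
      ((‖x‖₊ : ℝ≥0∞)) ^ c := fun c =>
    ENNReal.continuous_rpow_const.measurable.comp measurable_nnnorm.coe_nnreal_ennreal
  have humeas : Measurable u := hf.nnnorm.coe_nnreal_ennreal.mul (hrpowm sp)
  have hvmeas : Measurable v := hrpowm (-sp)
  have hkey : ∀ x ∈ Ω \ S, (‖f x‖₊ : ℝ≥0∞) = u x * v x := by
    intro x hx
    have hxn : (n:ℝ) < ‖x‖ := not_le.1 hx.2
    have hx0 : (0:ℝ) < ‖x‖ := hn0R.trans hxn
    have hxne : x ≠ 0 := fun h => by simp [h] at hx0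
    have hne : (‖x‖₊ : ℝ≥0∞) ≠ 0 := by simpa using hxne
    rw [hu, hv, mul_assoc, ← ENNReal.rpow_add _ _ hne ENNReal.coe_ne_top, add_neg_cancel,
      ENNReal.rpow_zero, mul_one]
  have hup : ∫⁻ x in Ω \ S, u x ^ (1 + 1 / (n:ℝ)) ∂volume = I2 := by
    rw [hI2]
    refine lintegral_congr fun x => ?_
    rw [hu, ENNReal.mul_rpow_of_nonneg _ _ hp0.le, ← ENNReal.rpow_mul,
      div_mul_cancel₀ _ hp0.ne']
  have hexp : -sp * ((n:ℝ) + 1) = -((N:ℝ) + 1/(n:ℝ)) := by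
    rw [hsp]
    field_simp
  have hB : ∫⁻ x in Ω \ S, v x ^ ((n:ℝ) + 1) ∂volume ≤ K := by
    have e1 : ∫⁻ x in Ω \ S, v x ^ ((n:ℝ) + 1) ∂volume
        = ∫⁻ x in Ω \ S, (‖x‖₊ : ℝ≥0∞) ^ (-((N:ℝ) + 1/(n:ℝ))) ∂volume := by
      refine lintegral_congr fun x => ?_
      rw [hv, ← ENNReal.rpow_mul, hexp]
    set g : ℝ → ℝ≥0∞ := fun r =>
      (Set.Ioi (n:ℝ)).indicator (fun r => ENNReal.ofReal r ^ (-((N:ℝ) + 1/(n:ℝ)))) r with hg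
    have hgmeas : Measurable g :=
      (ENNReal.continuous_rpow_const.measurable.comp ENNReal.measurable_ofReal).indicator
        measurableSet_Ioi
    have hT : MeasurableSet {x : EuclideanSpace ℝ (Fin N) | (n:ℝ) < ‖x‖} :=
      measurableSet_lt measurable_const measurable_norm
    calc ∫⁻ x in Ω \ S, v x ^ ((n:ℝ) + 1) ∂volume
        = ∫⁻ x in Ω \ S, (‖x‖₊ : ℝ≥0∞) ^ (-((N:ℝ) + 1/(n:ℝ))) ∂volume := e1
      _ ≤ ∫⁻ x in {x : EuclideanSpace ℝ (Fin N) | (n:ℝ) < ‖x‖},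
            (‖x‖₊ : ℝ≥0∞) ^ (-((N:ℝ) + 1/(n:ℝ))) ∂volume :=
          lintegral_mono_set (fun x hx => show (n:ℝ) < ‖x‖ from not_le.1 hx.2)
      _ = ∫⁻ x : EuclideanSpace ℝ (Fin N), g ‖x‖ ∂volume := by
          rw [← lintegral_indicator hT]
          refine lintegral_congr fun x => ?_
          by_cases h : (n:ℝ) < ‖x‖
          · rw [Set.indicator_of_mem (show x ∈ {x : EuclideanSpace ℝ (Fin N) | (n:ℝ) < ‖x‖}
                from h)]
            simp only [hg, Set.indicator_apply, Set.mem_Ioi]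
            rw [if_pos h, ofReal_norm, enorm_eq_nnnorm]
          · rw [Set.indicator_of_notMem (show x ∉ {x : EuclideanSpace ℝ (Fin N) | (n:ℝ) < ‖x‖}
                from h)]
            simp only [hg, Set.indicator_apply, Set.mem_Ioi]
            rw [if_neg h]
      _ = (Module.finrank ℝ (EuclideanSpace ℝ (Fin N)))
            * volume (Metric.ball (0 : EuclideanSpace ℝ (Fin N)) 1)
            * ∫⁻ y in Set.Ioi (0:ℝ),
                ENNReal.ofReal (y ^ (Module.finrank ℝ (EuclideanSpace ℝ (Fin N)) - 1)) * g y
                ∂volume :=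
          lintegral_polar volume hgmeas
      _ ≤ K := by
          rw [hfin, hK]
          have e2 : ∫⁻ y in Set.Ioi (0:ℝ), ENNReal.ofReal (y ^ (N - 1)) * g y ∂volume
              = ∫⁻ y in Set.Ioi ((n:ℝ)), ENNReal.ofReal (y ^ (N - 1)) *
                  ENNReal.ofReal y ^ (-((N:ℝ) + 1/(n:ℝ))) ∂volume := by
            have hpt : ∀ y : ℝ, ENNReal.ofReal (y ^ (N - 1)) * g y
                = (Set.Ioi (n:ℝ)).indicator
                    (fun y => ENNReal.ofReal (y ^ (N - 1)) *
                      ENNReal.ofReal y ^ (-((N:ℝ) + 1/(n:ℝ)))) y := by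
              intro y
              by_cases h : y ∈ Set.Ioi (n:ℝ)
              · simp only [hg, Set.indicator_apply, Set.mem_Ioi]
                rw [if_pos (Set.mem_Ioi.1 h), if_pos (Set.mem_Ioi.1 h)]
              · simp only [hg, Set.indicator_apply, Set.mem_Ioi]
                rw [if_neg (fun hc => h (Set.mem_Ioi.2 hc)),
                  if_neg (fun hc => h (Set.mem_Ioi.2 hc)), mul_zero]
            rw [lintegral_congr hpt, lintegral_indicator measurableSet_Ioi,
              Measure.restrict_restrict measurableSet_Ioi, Set.Ioi_inter_Ioi,
              max_eq_left hn0R.le]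
          rw [e2]
          calc (N:ℝ≥0∞) * volume (Metric.ball (0 : EuclideanSpace ℝ (Fin N)) 1)
                * ∫⁻ y in Set.Ioi ((n:ℝ)), ENNReal.ofReal (y ^ (N - 1)) *
                    ENNReal.ofReal y ^ (-((N:ℝ) + 1/(n:ℝ))) ∂volume
              ≤ (N:ℝ≥0∞) * volume (Metric.ball (0 : EuclideanSpace ℝ (Fin N)) 1) * (n:ℝ≥0∞) :=
                mul_le_mul_right (one_dim N n hN hn) _
            _ ≤ (N:ℝ≥0∞) * volume (Metric.ball (0 : EuclideanSpace ℝ (Fin N)) 1)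
                  * (n:ℝ≥0∞) ^ N :=
                mul_le_mul_right (le_self_pow₀ (by exact_mod_cast hn) (by omega)) _
  have bound2 : (∫⁻ x in Ω \ S, (‖f x‖₊ : ℝ≥0∞) ∂volume)
      ≤ I2 ^ (1 / (1 + 1 / (n:ℝ))) * K ^ (1 / ((n:ℝ) + 1)) := by
    have h0 : (∫⁻ x in Ω \ S, (‖f x‖₊ : ℝ≥0∞) ∂volume)
        = ∫⁻ x in Ω \ S, (u * v) x ∂volume :=
      setLIntegral_congr_fun (hΩm.diff hS) (fun x hx => hkey x hx)
    rw [h0]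
    have h := ENNReal.lintegral_mul_le_Lp_mul_Lq (volume.restrict (Ω \ S)) hpq
      humeas.aemeasurable hvmeas.aemeasurable
    refine h.trans ?_
    rw [hup]
    exact mul_le_mul_right (ENNReal.rpow_le_rpow hB hqinv) _
  -- combine
  calc (∫⁻ x in Ω, (‖f x‖₊ : ℝ≥0∞) ∂volume)
      = (∫⁻ x in Ω ∩ S, (‖f x‖₊ : ℝ≥0∞) ∂volume)
        + ∫⁻ x in Ω \ S, (‖f x‖₊ : ℝ≥0∞) ∂volume := hsplit
    _ ≤ I1 ^ (1 / (1 + 1 / (n:ℝ))) * K ^ (1 / ((n:ℝ) + 1))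
        + I2 ^ (1 / (1 + 1 / (n:ℝ))) * K ^ (1 / ((n:ℝ) + 1)) := add_le_add bound1 bound2
    _ = (I1 ^ (1 / (1 + 1 / (n:ℝ))) + I2 ^ (1 / (1 + 1 / (n:ℝ)))) * K ^ (1 / ((n:ℝ) + 1)) :=
        (add_mul _ _ _).symm
    _ ≤ (2 ^ (1 / ((n:ℝ) + 1)) * (I1 + I2) ^ (1 / (1 + 1 / (n:ℝ)))) * K ^ (1 / ((n:ℝ) + 1)) :=
        mul_le_mul_left (two_rpow_helper I1 I2 hpq) _
    _ = (2 * ((N : ℝ≥0∞) * volume (Metric.ball (0 : EuclideanSpace ℝ (Fin N)) 1))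
          * (n : ℝ≥0∞) ^ N) ^ ((1:ℝ) / ((n:ℝ) + 1)) * (I1 + I2) ^ ((1:ℝ) / (1 + 1 / (n:ℝ))) := by
        have hbase : 2 * ((N : ℝ≥0∞) * volume (Metric.ball (0 : EuclideanSpace ℝ (Fin N)) 1))
            * (n : ℝ≥0∞) ^ N = 2 * K := by rw [hK]; ring
        rw [hbase, ENNReal.mul_rpow_of_nonneg 2 K hqinv, mul_right_comm]
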